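/- For every n ≥ 2, there is an order isomorphism between the order dual of (Ir(Δⁿ), ⊑) and the set of nonempty subsets of {1,…,n} ordered by inclusion. -/

import Mathlib

/-- Δⁿ : classical n-states. -/
def IsClassicalState (n : ℕ) (x : Fin n → ℝ) : Prop :=
  (∀ i, 0 ≤ x i) ∧ ∑ i, x i = 1

def ClState (n : ℕ) := {x : Fin n → ℝ // IsClassicalState n x}

/-- The Bayesian order (symmetric characterization). -/
def bayesLE {n : ℕ} (x y : Fin n → ℝ) : Prop :=
  ∃ σ : Equiv.Perm (Fin n),
    Antitone (fun i => x (σ i)) ∧ Antitone (fun i => y (σ i)) ∧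
    ∀ i j : Fin n, (i : ℕ) + 1 = (j : ℕ) →
      x (σ i) * y (σ j) ≤ x (σ j) * y (σ i)

def clLE {n : ℕ} (x y : ClState n) : Prop := bayesLE x.val y.val

/-- The maximal elements with respect to `le`. -/
def MaxElts {α : Type*} (le : α → α → Prop) : Set α := {x | ∀ y, le x y → y = x}

/-- `a` is the infimum (greatest lower bound) of `S` with respect to `le`. -/
def IsInf' {α : Type*} (le : α → α → Prop) (S : Set α) (a : α) : Prop :=
  (∀ s ∈ S, le a s) ∧ ∀ b, (∀ s ∈ S, le b s) → le b a

/-- `x` is irreducible: the infimum of ↑x ∩ max(D) exists and equals x. -/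
def Irr {α : Type*} (le : α → α → Prop) : Set α :=
  {x | IsInf' le {y | le x y ∧ y ∈ MaxElts le} x}

/-- The order dual of the irreducibles of (Δⁿ, ⊑) is order isomorphic to the
nonempty subsets of {1,…,n} ordered by inclusion. -/


noncomputable def unifF {n : ℕ} (S : Finset (Fin n)) : Fin n → ℝ :=
  fun i => if i ∈ S then (S.card : ℝ)⁻¹ else 0

lemma unifF_nonneg {n : ℕ} (S : Finset (Fin n)) (i : Fin n) : 0 ≤ unifF S i := by
  unfold unifF; split
  · positivity
  · exact le_rfl

lemma unifF_state {n : ℕ} {S : Finset (Fin n)} (hS : S.Nonempty) :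
    IsClassicalState n (unifF S) := by
  refine ⟨unifF_nonneg S, ?_⟩
  unfold unifF
  rw [Finset.sum_ite_mem, Finset.univ_inter, Finset.sum_const, nsmul_eq_mul,
    mul_inv_cancel₀]
  exact_mod_cast Finset.card_ne_zero.2 hS

lemma prefix_lemma {n : ℕ} (σ : Equiv.Perm (Fin n)) (S : Finset (Fin n))
    (hlow : ∀ i j : Fin n, i ≤ j → σ j ∈ S → σ i ∈ S) (i : Fin n) :
    σ i ∈ S ↔ (i : ℕ) < S.card := by
  classical
  set T : Finset (Fin n) := Finset.univ.filter (fun i => σ i ∈ S) with hTdef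
  have hT : T.card = S.card := by
    have himg : T.image σ = S := by
      ext s
      simp only [Finset.mem_image, hTdef, Finset.mem_filter, Finset.mem_univ, true_and]
      constructor
      · rintro ⟨a, ha, rfl⟩; exact ha
      · intro hs; exact ⟨σ.symm s, by simpa using hs, by simp⟩
    rw [← himg, Finset.card_image_of_injective _ σ.injective]
  constructor
  · intro hi
    by_contra h
    push_neg at h
    have hsub : Finset.Iic i ⊆ T := by
      intro j hj
      simp only [hTdef, Finset.mem_filter, Finset.mem_univ, true_and]
      exact hlow j i (Finset.mem_Iic.mp hj) hi
    have := Finset.card_le_card hsub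
    rw [Fin.card_Iic, hT] at this
    omega
  · intro hi
    by_contra h
    have hsub : T ⊆ Finset.Iio i := by
      intro j hj
      simp only [hTdef, Finset.mem_filter, Finset.mem_univ, true_and] at hj
      rw [Finset.mem_Iio]
      by_contra hj2
      push_neg at hj2
      exact h (hlow i j hj2 hj)
    have := Finset.card_le_card hsub
    rw [Fin.card_Iio, hT] at this
    omega

lemma le_unifF {n : ℕ} {x : Fin n → ℝ} (hx : ∀ i, 0 ≤ x i) (S : Finset (Fin n))
    (hmax : ∀ k ∈ S, ∀ i, x i ≤ x k) : bayesLE x (unifF S) := by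
  classical
  set key : Fin n → ℝ := fun i => if i ∈ S then x i + 1 else x i with hkey
  set σ : Equiv.Perm (Fin n) := Tuple.sort (fun i => -key i) with hσ
  have hmono : Monotone ((fun i => -key i) ∘ σ) := Tuple.monotone_sort _
  have hanti : Antitone (fun i => key (σ i)) := by
    intro i j hij
    have := hmono hij
    simpa using this
  have hmem : ∀ i j : Fin n, i ≤ j → σ j ∈ S → σ i ∈ S := by
    intro i j hij hj
    by_contra hi
    have h1 : key (σ j) ≤ key (σ i) := hanti hij
    have h2 : key (σ j) = x (σ j) + 1 := by simp [hkey, hj]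
    have h3 : key (σ i) = x (σ i) := by simp [hkey, hi]
    have h4 : x (σ i) ≤ x (σ j) := hmax _ hj _
    linarith
  have hxconst : ∀ k ∈ S, ∀ k' ∈ S, x k = x k' :=
    fun k hk k' hk' => le_antisymm (hmax k' hk' k) (hmax k hk k')
  refine ⟨σ, ?_, ?_, ?_⟩
  · intro i j hij
    by_cases hj : σ j ∈ S
    · have hi := hmem i j hij hj
      exact le_of_eq (hxconst _ hj _ hi)
    · by_cases hi : σ i ∈ S
      · exact hmax _ hi _
      · have h1 : key (σ j) ≤ key (σ i) := hanti hij
        simpa [hkey, hi, hj] using h1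
  · intro i j hij
    by_cases hj : σ j ∈ S
    · have hi := hmem i j hij hj
      simp [unifF, hi, hj]
    · simp only [unifF, hj, if_neg]
      exact le_trans (le_rfl) (unifF_nonneg S (σ i))
  · intro i j hij
    have hij' : i ≤ j := by
      rw [Fin.le_def]; omega
    by_cases hj : σ j ∈ S
    · have hi := hmem i j hij' hj
      rw [hxconst _ hi _ hj]
      simp [unifF, hi, hj, mul_comm]
    · have h0 : unifF S (σ j) = 0 := by simp [unifF, hj]
      rw [h0, mul_zero]
      exact mul_nonneg (hx _) (unifF_nonneg _ _)

lemma unifF_pos_card {n : ℕ} {S : Finset (Fin n)} (hS : S.Nonempty) :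
    (0 : ℝ) < (S.card : ℝ)⁻¹ := by
  have := Finset.card_pos.mpr hS
  positivity

lemma supp_subset_of_unifF_le {n : ℕ} {S : Finset (Fin n)} (hS : S.Nonempty)
    {x : Fin n → ℝ} (hx : ∀ i, 0 ≤ x i) (h : bayesLE (unifF S) x) :
    ∀ t, t ∉ S → x t = 0 := by
  obtain ⟨σ, hu, hxm, hr⟩ := h
  have hlow : ∀ i j : Fin n, i ≤ j → σ j ∈ S → σ i ∈ S := by
    intro i j hij hj
    have h1 : unifF S (σ j) ≤ unifF S (σ i) := hu hij
    have h2 : unifF S (σ j) = (S.card : ℝ)⁻¹ := by simp [unifF, hj]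
    by_contra hi
    have h3 : unifF S (σ i) = 0 := by simp [unifF, hi]
    have := unifF_pos_card hS
    rw [h2, h3] at h1
    linarith
  have hpre := prefix_lemma σ S hlow
  intro t ht
  have hmn : S.card < n := by
    have h1 : S.card ≤ n := by
      have := Finset.card_le_univ S
      simpa using this
    rcases lt_or_eq_of_le h1 with h | h
    · exact h
    · exfalso
      have : S = Finset.univ := Finset.eq_univ_of_card S (by simp [h])
      exact ht (this ▸ Finset.mem_univ t)
  have hm1 : 1 ≤ S.card := Finset.card_pos.mpr hS
  set j : Fin n := ⟨S.card, hmn⟩ with hjdef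
  set i : Fin n := ⟨S.card - 1, by omega⟩ with hidef
  have hij : (i : ℕ) + 1 = (j : ℕ) := by show S.card - 1 + 1 = S.card; omega
  have hiS : σ i ∈ S := (hpre i).mpr (by show S.card - 1 < S.card; omega)
  have hjS : σ j ∉ S := fun hc => by
    have := (hpre j).mp hc
    have : S.card < S.card := this
    omega
  have hcond := hr i j hij
  rw [show unifF S (σ j) = 0 by simp [unifF, hjS],
      show unifF S (σ i) = (S.card : ℝ)⁻¹ by simp [unifF, hiS], zero_mul] at hcond
  have hxj : x (σ j) = 0 := by
    have hpos := unifF_pos_card hS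
    nlinarith [hx (σ j)]
  have hp : j ≤ σ.symm t := by
    rw [Fin.le_def]
    have : ¬ ((σ.symm t : ℕ) < S.card) := fun hc => ht (by simpa using (hpre (σ.symm t)).mpr hc)
    show S.card ≤ (σ.symm t : ℕ)
    omega
  have h2 : x (σ (σ.symm t)) ≤ x (σ j) := hxm hp
  rw [Equiv.apply_symm_apply, hxj] at h2
  exact le_antisymm h2 (hx t)

lemma unifF_singleton {n : ℕ} (k i : Fin n) :
    unifF {k} i = if i = k then 1 else 0 := by
  simp [unifF]

lemma sigma_zero_eq {n : ℕ} {σ : Equiv.Perm (Fin n)} {k : Fin n}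
    (h : Antitone (fun i => unifF {k} (σ i))) (hn : 0 < n) : σ ⟨0, hn⟩ = k := by
  have h1 : unifF {k} (σ (σ.symm k)) ≤ unifF {k} (σ ⟨0, hn⟩) :=
    h (by rw [Fin.le_def]; exact Nat.zero_le _)
  rw [Equiv.apply_symm_apply, unifF_singleton, if_pos rfl] at h1
  by_contra hc
  rw [unifF_singleton, if_neg hc] at h1
  linarith

lemma argmax_of_le_pure {n : ℕ} {x : Fin n → ℝ} {k : Fin n}
    (h : bayesLE x (unifF {k})) : ∀ i, x i ≤ x k := by
  obtain ⟨σ, hxm, hu, _⟩ := h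
  intro i
  have hn : 0 < n := i.pos
  have h0 : σ ⟨0, hn⟩ = k := sigma_zero_eq hu hn
  have h2 : x (σ (σ.symm i)) ≤ x (σ ⟨0, hn⟩) :=
    hxm (show (⟨0, hn⟩ : Fin n) ≤ σ.symm i from by rw [Fin.le_def]; exact Nat.zero_le _)
  rwa [Equiv.apply_symm_apply, h0] at h2

lemma pure_maximal {n : ℕ} (hn : 2 ≤ n) (k : Fin n) {y : Fin n → ℝ}
    (hy : IsClassicalState n y) (h : bayesLE (unifF {k}) y) : y = unifF {k} := by
  obtain ⟨σ, hxm, hym, hr⟩ := h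
  have hn0 : 0 < n := by omega
  have h0 : σ ⟨0, hn0⟩ = k := sigma_zero_eq hxm hn0
  set z0 : Fin n := ⟨0, hn0⟩ with hz0
  set z1 : Fin n := ⟨1, by omega⟩ with hz1
  have hcond := hr z0 z1 (by show 0 + 1 = 1; rfl)
  have hne : σ z1 ≠ k := by
    rw [← h0]
    intro hc
    have := σ.injective hc
    simp [hz0, hz1, Fin.ext_iff] at this
  rw [h0, unifF_singleton, if_pos rfl, unifF_singleton, if_neg hne, zero_mul, one_mul] at hcond
  have hy1 : y (σ z1) = 0 := le_antisymm hcond (hy.1 _)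
  have hzero : ∀ j : Fin n, j ≠ z0 → y (σ j) = 0 := by
    intro j hj
    have hle : z1 ≤ j := by
      rw [Fin.le_def]
      show 1 ≤ (j : ℕ)
      have : (j : ℕ) ≠ 0 := fun hc => hj (Fin.ext hc)
      omega
    have h2 : y (σ j) ≤ y (σ z1) := hym hle
    exact le_antisymm (hy1 ▸ h2) (hy.1 _)
  have hsum : ∑ j, y (σ j) = 1 := by
    rw [Equiv.sum_comp σ y]; exact hy.2
  have hy0 : y (σ z0) = 1 := by
    rw [Fintype.sum_eq_single z0 (fun b hb => hzero b hb)] at hsum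
    exact hsum
  funext i
  rw [unifF_singleton]
  by_cases hik : i = k
  · rw [if_pos hik, hik, ← h0]; exact hy0
  · rw [if_neg hik]
    have hne0 : σ.symm i ≠ z0 := by
      intro hc
      apply hik
      rw [← h0, ← hc, Equiv.apply_symm_apply]
    have := hzero _ hne0
    rwa [Equiv.apply_symm_apply] at this

lemma unifF_le_unifF {n : ℕ} {S T : Finset (Fin n)} (hS : S.Nonempty) (hT : T.Nonempty) :
    bayesLE (unifF S) (unifF T) ↔ T ⊆ S := by
  constructor
  · rintro ⟨σ, hS', hT', hr⟩
    have hlowS : ∀ i j : Fin n, i ≤ j → σ j ∈ S → σ i ∈ S := by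
      intro i j hij hj
      have h1 : unifF S (σ j) ≤ unifF S (σ i) := hS' hij
      by_contra hi
      rw [show unifF S (σ j) = (S.card : ℝ)⁻¹ by simp [unifF, hj],
        show unifF S (σ i) = 0 by simp [unifF, hi]] at h1
      have := unifF_pos_card hS
      linarith
    have hlowT : ∀ i j : Fin n, i ≤ j → σ j ∈ T → σ i ∈ T := by
      intro i j hij hj
      have h1 : unifF T (σ j) ≤ unifF T (σ i) := hT' hij
      by_contra hi
      rw [show unifF T (σ j) = (T.card : ℝ)⁻¹ by simp [unifF, hj],
        show unifF T (σ i) = 0 by simp [unifF, hi]] at h1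
      have := unifF_pos_card hT
      linarith
    have hpreS := prefix_lemma σ S hlowS
    have hpreT := prefix_lemma σ T hlowT
    rcases le_or_gt T.card S.card with hc | hc
    · intro t ht
      have h1 : ((σ.symm t : Fin n) : ℕ) < T.card := by
        apply (hpreT _).mp
        rwa [Equiv.apply_symm_apply]
      have h2 : ((σ.symm t : Fin n) : ℕ) < S.card := lt_of_lt_of_le h1 hc
      have := (hpreS _).mpr h2
      rwa [Equiv.apply_symm_apply] at this
    · exfalso
      have hm1 : 1 ≤ S.card := Finset.card_pos.mpr hS
      have hmn : S.card < n := by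
        have h1 : T.card ≤ n := by have := Finset.card_le_univ T; simpa using this
        omega
      set j : Fin n := ⟨S.card, hmn⟩ with hjdef
      set i : Fin n := ⟨S.card - 1, by omega⟩ with hidef
      have hij : (i : ℕ) + 1 = (j : ℕ) := by show S.card - 1 + 1 = S.card; omega
      have hiS : σ i ∈ S := (hpreS i).mpr (by show S.card - 1 < S.card; omega)
      have hjS : σ j ∉ S := fun hcc => by
        have : S.card < S.card := (hpreS j).mp hcc
        omega
      have hiT : σ i ∈ T := (hpreT i).mpr (by show S.card - 1 < T.card; omega)
      have hjT : σ j ∈ T := (hpreT j).mpr (by show S.card < T.card; omega)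
      have hcond := hr i j hij
      rw [show unifF S (σ i) = (S.card : ℝ)⁻¹ by simp [unifF, hiS],
        show unifF S (σ j) = 0 by simp [unifF, hjS],
        show unifF T (σ j) = (T.card : ℝ)⁻¹ by simp [unifF, hjT], zero_mul] at hcond
      have := unifF_pos_card hS
      have := unifF_pos_card hT
      nlinarith
  · intro hTS
    apply le_unifF (unifF_nonneg S)
    intro k hk i
    have hkS : k ∈ S := hTS hk
    rw [show unifF S k = (S.card : ℝ)⁻¹ by simp [unifF, hkS]]
    by_cases hi : i ∈ S
    · rw [show unifF S i = (S.card : ℝ)⁻¹ by simp [unifF, hi]]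
    · rw [show unifF S i = 0 by simp [unifF, hi]]
      exact le_of_lt (unifF_pos_card hS)

open Classical in
noncomputable def argmaxSet {n : ℕ} (x : Fin n → ℝ) : Finset (Fin n) :=
  Finset.univ.filter fun k => ∀ i, x i ≤ x k

open Classical in
lemma mem_argmaxSet {n : ℕ} {x : Fin n → ℝ} {k : Fin n} :
    k ∈ argmaxSet x ↔ ∀ i, x i ≤ x k := by
  simp [argmaxSet]

lemma argmaxSet_nonempty {n : ℕ} (hn : 0 < n) (x : Fin n → ℝ) :
    (argmaxSet x).Nonempty := by
  obtain ⟨k, -, hk⟩ := Finset.exists_max_image Finset.univ x ⟨⟨0, hn⟩, Finset.mem_univ _⟩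
  exact ⟨k, mem_argmaxSet.mpr fun i => hk i (Finset.mem_univ i)⟩

lemma argmaxSet_unifF {n : ℕ} {S : Finset (Fin n)} (hS : S.Nonempty) :
    argmaxSet (unifF S) = S := by
  ext k
  rw [mem_argmaxSet]
  constructor
  · intro h
    have hS2 := hS
    obtain ⟨k0, hk0⟩ := hS2
    have h1 := h k0
    by_contra hk
    rw [show unifF S k0 = (S.card : ℝ)⁻¹ by simp [unifF, hk0],
      show unifF S k = 0 by simp [unifF, hk]] at h1
    have := unifF_pos_card hS
    linarith
  · intro hk i
    rw [show unifF S k = (S.card : ℝ)⁻¹ by simp [unifF, hk]]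
    by_cases hi : i ∈ S
    · rw [show unifF S i = (S.card : ℝ)⁻¹ by simp [unifF, hi]]
    · rw [show unifF S i = 0 by simp [unifF, hi]]
      exact le_of_lt (unifF_pos_card hS)

lemma maxElts_char {n : ℕ} (hn : 2 ≤ n) (x : ClState n) :
    x ∈ MaxElts clLE ↔ ∃ k, x.val = unifF {k} := by
  constructor
  · intro hmax
    obtain ⟨k, hk⟩ := argmaxSet_nonempty (by omega) x.val
    rw [mem_argmaxSet] at hk
    have hle : clLE x ⟨unifF {k}, unifF_state (Finset.singleton_nonempty k)⟩ := by
      apply le_unifF x.2.1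
      intro k' hk'
      rw [Finset.mem_singleton] at hk'
      subst hk'
      exact hk
    have := hmax _ hle
    exact ⟨k, by rw [← this]⟩
  · rintro ⟨k, hxk⟩ y hle
    apply Subtype.ext
    rw [hxk]
    unfold clLE at hle
    rw [hxk] at hle
    exact pure_maximal hn k y.2 hle

lemma le_pure_of_argmax {n : ℕ} {x : Fin n → ℝ} (hx : ∀ i, 0 ≤ x i) {k : Fin n}
    (hk : ∀ i, x i ≤ x k) : bayesLE x (unifF {k}) := by
  apply le_unifF hx
  intro k' hk'
  rw [Finset.mem_singleton] at hk'
  subst hk'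
  exact hk

lemma unifF_mem_Irr {n : ℕ} (hn : 2 ≤ n) {S : Finset (Fin n)} (hS : S.Nonempty) :
    (⟨unifF S, unifF_state hS⟩ : ClState n) ∈ Irr clLE := by
  constructor
  · exact fun s hs => hs.1
  · intro b hb
    have hbk : ∀ k ∈ S, ∀ i, b.val i ≤ b.val k := by
      intro k hk
      have hek : (⟨unifF {k}, unifF_state (Finset.singleton_nonempty k)⟩ : ClState n) ∈
          {y | clLE (⟨unifF S, unifF_state hS⟩ : ClState n) y ∧ y ∈ MaxElts clLE} := by
        constructor
        · show bayesLE (unifF S) (unifF {k})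
          rw [unifF_le_unifF hS (Finset.singleton_nonempty k)]
          simpa using hk
        · refine (maxElts_char hn _).mpr ?_
          exact ⟨k, rfl⟩
      have := hb _ hek
      exact argmax_of_le_pure this
    exact le_unifF b.2.1 S hbk

lemma irr_eq_unifF {n : ℕ} (hn : 2 ≤ n) (x : ClState n) (hx : x ∈ Irr clLE) :
    x.val = unifF (argmaxSet x.val) := by
  set A := argmaxSet x.val with hAdef
  have hA : A.Nonempty := argmaxSet_nonempty (by omega) x.val
  have hlb : ∀ y ∈ {y | clLE x y ∧ y ∈ MaxElts clLE},
      clLE (⟨unifF A, unifF_state hA⟩ : ClState n) y := by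
    rintro y ⟨hy1, hy2⟩
    obtain ⟨k, hk⟩ := (maxElts_char hn y).mp hy2
    show bayesLE (unifF A) y.val
    rw [hk]
    apply le_pure_of_argmax (unifF_nonneg A)
    have hkA : k ∈ A := by
      rw [hAdef, mem_argmaxSet]
      apply argmax_of_le_pure
      show bayesLE x.val (unifF {k})
      rw [← hk]
      exact hy1
    intro i
    rw [show unifF A k = (A.card : ℝ)⁻¹ by simp [unifF, hkA]]
    by_cases hi : i ∈ A
    · rw [show unifF A i = (A.card : ℝ)⁻¹ by simp [unifF, hi]]
    · rw [show unifF A i = 0 by simp [unifF, hi]]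
      exact le_of_lt (unifF_pos_card hA)
  have hle : bayesLE (unifF A) x.val := hx.2 _ hlb
  have hsupp : ∀ t, t ∉ A → x.val t = 0 := supp_subset_of_unifF_le hA x.2.1 hle
  have hsum : ∑ i ∈ A, x.val i = 1 := by
    rw [← x.2.2]
    apply Finset.sum_subset (Finset.subset_univ A)
    intro t _ ht
    exact hsupp t ht
  funext i
  by_cases hi : i ∈ A
  · have hconst : ∀ j ∈ A, x.val j = x.val i := by
      intro j hj
      rw [hAdef, mem_argmaxSet] at hi hj
      exact le_antisymm (hi j) (hj i)
    rw [Finset.sum_congr rfl hconst, Finset.sum_const, nsmul_eq_mul] at hsum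
    have hcard : (A.card : ℝ) ≠ 0 := by
      exact_mod_cast Finset.card_ne_zero.2 hA
    rw [show unifF A i = (A.card : ℝ)⁻¹ by simp [unifF, hi]]
    field_simp at hsum ⊢
    linarith
  · rw [show unifF A i = 0 by simp [unifF, hi]]
    exact hsupp i hi

theorem irreducibles_classical (n : ℕ) (hn : 2 ≤ n) :
    ∃ f : {x : ClState n // x ∈ Irr clLE} → {s : Set (Fin n) // s.Nonempty},
      Function.Bijective f ∧
      ∀ a b : {x : ClState n // x ∈ Irr clLE},
        clLE b.val a.val ↔ (f a).val ⊆ (f b).val := by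
  classical
  refine ⟨fun x => ⟨(argmaxSet x.val.val : Set (Fin n)),
    Finset.coe_nonempty.mpr (argmaxSet_nonempty (by omega) _)⟩, ⟨?_, ?_⟩, ?_⟩
  · intro a b hab
    have h1 : (argmaxSet a.val.val : Set (Fin n)) = (argmaxSet b.val.val : Set (Fin n)) :=
      congrArg Subtype.val hab
    have h2 : argmaxSet a.val.val = argmaxSet b.val.val := Finset.coe_injective h1
    apply Subtype.ext
    apply Subtype.ext
    rw [irr_eq_unifF hn a.val a.2, irr_eq_unifF hn b.val b.2, h2]
  · rintro ⟨s, hs⟩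
    set S : Finset (Fin n) := (Set.toFinite s).toFinset with hSdef
    have hSne : S.Nonempty := by
      rw [hSdef, Set.Finite.toFinset_nonempty]
      exact hs
    refine ⟨⟨⟨unifF S, unifF_state hSne⟩, unifF_mem_Irr hn hSne⟩, ?_⟩
    apply Subtype.ext
    show (argmaxSet (unifF S) : Set (Fin n)) = s
    rw [argmaxSet_unifF hSne, hSdef, Set.Finite.coe_toFinset]
  · intro a b
    show bayesLE b.val.val a.val.val ↔ _
    rw [irr_eq_unifF hn a.val a.2, irr_eq_unifF hn b.val b.2,
      unifF_le_unifF (argmaxSet_nonempty (by omega) _) (argmaxSet_nonempty (by omega) _)]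
    constructor
    · intro h
      exact Finset.coe_subset.mpr h
    · intro h
      exact Finset.coe_subset.mp h
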